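/- Let K ∈ ℕ, b₁ ∈ ℝ, b₂ ∈ (b₁,∞), β ∈ (0,∞), let 𝔵_k = b₁ + k(b₂−b₁)/K for k = 0,...,K be the equidistant grid, let f: [b₁,b₂] → ℝ be L-Lipschitz, let 𝔞(x) = β^{−1}ln(1+exp(βx)), and define g: ℝ → ℝ by g(x) = f(𝔵₀) + Σ_{k=1}^K ((f(𝔵_k) − f(𝔵_{k−1}))/(𝔵_k − 𝔵_{k−1}))·(𝔞(x − 𝔵_{k−1}) − 𝔞(x − 𝔵_k)). Then g is L-Lipschitz on ℝ, i.e., |g(x) − g(y)| ≤ L|x−y| for all x,y ∈ ℝ. -/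

import Mathlib

theorem stmt17 (K : ℕ) (hK : 1 ≤ K) (b₁ b₂ L β : ℝ) (hb : b₁ < b₂) (hβ : 0 < β)
    (𝔵 : ℕ → ℝ) (h𝔵 : ∀ k, 𝔵 k = b₁ + k * (b₂ - b₁) / K)
    (f : ℝ → ℝ)
    (hf : ∀ x ∈ Set.Icc b₁ b₂, ∀ y ∈ Set.Icc b₁ b₂, |f x - f y| ≤ L * |x - y|)
    (g : ℝ → ℝ)
    (hg : ∀ x : ℝ, g x = f (𝔵 0) + ∑ k ∈ Finset.Icc 1 K,
      ((f (𝔵 k) - f (𝔵 (k - 1))) / (𝔵 k - 𝔵 (k - 1))) *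
        (β⁻¹ * Real.log (1 + Real.exp (β * (x - 𝔵 (k - 1))))
          - β⁻¹ * Real.log (1 + Real.exp (β * (x - 𝔵 k))))) :
    ∀ x y : ℝ, |g x - g y| ≤ L * |x - y| := by
  have hKR : (0:ℝ) < (K:ℝ) := by exact_mod_cast Nat.pos_of_ne_zero (by omega)
  have hC : (0:ℝ) < (b₂ - b₁)/K := div_pos (by linarith) hKR
  have hstep : ∀ k : ℕ, 1 ≤ k → 𝔵 k - 𝔵 (k-1) = (b₂ - b₁)/K := by
    intro k hk
    rw [h𝔵, h𝔵]
    have h1 : ((k-1:ℕ):ℝ) = (k:ℝ) - 1 := by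
      push_cast [Nat.cast_sub hk]; ring
    rw [h1]; ring
  have hmem : ∀ k : ℕ, k ≤ K → 𝔵 k ∈ Set.Icc b₁ b₂ := by
    intro k hk
    rw [h𝔵]
    constructor
    · have : 0 ≤ (k:ℝ) * (b₂ - b₁) / K :=
        div_nonneg (mul_nonneg (Nat.cast_nonneg k) (by linarith)) hKR.le
      linarith
    · have hkK : (k:ℝ) ≤ K := by exact_mod_cast hk
      have h2 : (k:ℝ) * (b₂ - b₁) / K ≤ (K:ℝ) * (b₂-b₁)/K := by
        gcongr
      have h3 : (K:ℝ) * (b₂-b₁)/K = b₂ - b₁ := by field_simp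
      linarith
  have hL0 : 0 ≤ L := by
    have h1 := hf b₁ ⟨le_refl _, le_of_lt hb⟩ b₂ ⟨le_of_lt hb, le_refl _⟩
    have h2 : 0 < |b₁ - b₂| := abs_pos.mpr (by linarith)
    nlinarith [abs_nonneg (f b₁ - f b₂)]
  set s : ℝ → ℝ := fun t => Real.exp (β*t) / (1 + Real.exp (β*t)) with hs
  have hspos : ∀ t : ℝ, (0:ℝ) < 1 + Real.exp (β*t) := fun t => by positivity
  have hs0 : ∀ t, 0 ≤ s t := fun t => by rw [hs]; positivity
  have hs1 : ∀ t, s t ≤ 1 := by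
    intro t
    rw [hs]
    simp only
    rw [div_le_one (hspos t)]
    linarith [Real.exp_pos (β*t)]
  have hsmono : ∀ a b : ℝ, a ≤ b → s a ≤ s b := by
    intro a b hab
    rw [hs]
    simp only
    rw [div_le_div_iff₀ (hspos a) (hspos b)]
    have h1 : Real.exp (β*a) ≤ Real.exp (β*b) :=
      Real.exp_le_exp.mpr (mul_le_mul_of_nonneg_left hab hβ.le)
    nlinarith [Real.exp_pos (β*a), Real.exp_pos (β*b)]
  have haux : ∀ (u t : ℝ), HasDerivAt
      (fun z => β⁻¹ * Real.log (1 + Real.exp (β * (z - u)))) (s (t - u)) t := by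
    intro u t
    have h1 : HasDerivAt (fun z : ℝ => β * (z - u)) β t := by
      simpa using ((hasDerivAt_id t).sub_const u).const_mul β
    have h2 := h1.exp
    have h3 := h2.const_add 1
    have h4 := h3.log (by positivity)
    have h5 := h4.const_mul β⁻¹
    refine h5.congr_deriv ?_
    rw [hs]
    field_simp
  set c : ℕ → ℝ := fun k => (f (𝔵 k) - f (𝔵 (k-1))) / (𝔵 k - 𝔵 (k-1)) with hc
  set G : ℝ → ℝ := fun t => f (𝔵 0) + ∑ k ∈ Finset.Icc 1 K,
      c k * (β⁻¹ * Real.log (1 + Real.exp (β * (t - 𝔵 (k-1))))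
        - β⁻¹ * Real.log (1 + Real.exp (β * (t - 𝔵 k)))) with hG
  have hgG : ∀ t, g t = G t := by intro t; rw [hg t, hG]
  set G' : ℝ → ℝ := fun t => ∑ k ∈ Finset.Icc 1 K,
      c k * (s (t - 𝔵 (k-1)) - s (t - 𝔵 k)) with hG'
  have hderiv : ∀ t, HasDerivAt G (G' t) t := by
    intro t
    rw [hG, hG']
    apply HasDerivAt.const_add
    apply HasDerivAt.fun_sum
    intro k _
    exact ((haux (𝔵 (k-1)) t).sub (haux (𝔵 k) t)).const_mul (c k)
  have hcbd : ∀ k ∈ Finset.Icc 1 K, |c k| ≤ L := by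
    intro k hk
    simp only [Finset.mem_Icc] at hk
    have hkk := hstep k hk.1
    have h1 := hf (𝔵 k) (hmem k hk.2) (𝔵 (k-1)) (hmem (k-1) (by omega))
    rw [hc]
    simp only
    rw [abs_div, div_le_iff₀ (by rw [hkk, abs_of_pos hC]; exact hC)]
    exact h1
  have hbound : ∀ t, |G' t| ≤ L := by
    intro t
    rw [hG']
    have hnn : ∀ k ∈ Finset.Icc 1 K, 0 ≤ s (t - 𝔵 (k-1)) - s (t - 𝔵 k) := by
      intro k hk
      simp only [Finset.mem_Icc] at hk
      have := hstep k hk.1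
      have hle : t - 𝔵 k ≤ t - 𝔵 (k-1) := by linarith [hC]
      linarith [hsmono _ _ hle]
    calc |∑ k ∈ Finset.Icc 1 K, c k * (s (t - 𝔵 (k-1)) - s (t - 𝔵 k))|
        ≤ ∑ k ∈ Finset.Icc 1 K, |c k * (s (t - 𝔵 (k-1)) - s (t - 𝔵 k))| :=
          Finset.abs_sum_le_sum_abs _ _
      _ ≤ ∑ k ∈ Finset.Icc 1 K, L * (s (t - 𝔵 (k-1)) - s (t - 𝔵 k)) := by
          apply Finset.sum_le_sum
          intro k hk
          rw [abs_mul, abs_of_nonneg (hnn k hk)]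
          exact mul_le_mul_of_nonneg_right (hcbd k hk) (hnn k hk)
      _ = L * ∑ k ∈ Finset.Icc 1 K, (s (t - 𝔵 (k-1)) - s (t - 𝔵 k)) :=
          (Finset.mul_sum _ _ _).symm
      _ ≤ L * 1 := by
          apply mul_le_mul_of_nonneg_left _ hL0
          have htel : ∀ n : ℕ, ∑ k ∈ Finset.Icc 1 n, (s (t - 𝔵 (k-1)) - s (t - 𝔵 k))
              = s (t - 𝔵 0) - s (t - 𝔵 n) := by
            intro n
            induction n with
            | zero => simp
            | succ m ih =>
              rw [show Finset.Icc 1 (m+1) = Finset.Icc 1 m ∪ {m+1} by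
                ext a; simp [Finset.mem_Icc]; omega]
              rw [Finset.sum_union (by simp [Finset.disjoint_singleton_right, Finset.mem_Icc])]
              simp only [Finset.sum_singleton, Nat.add_sub_cancel]
              rw [ih]; ring
          rw [htel K]
          linarith [hs1 (t - 𝔵 0), hs0 (t - 𝔵 K)]
      _ = L := mul_one L
  intro x y
  have key := Convex.norm_image_sub_le_of_norm_hasDerivWithin_le
    (f := G) (f' := G') (s := Set.univ) (C := L)
    (fun t _ => (hderiv t).hasDerivWithinAt)
    (fun t _ => by simpa [Real.norm_eq_abs] using hbound t)
    convex_univ (Set.mem_univ y) (Set.mem_univ x)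
  rw [hgG x, hgG y]
  simpa [Real.norm_eq_abs] using key
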